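/- Let W, V_1, ..., V_n be an isometric representation of the odometer semigroup O_n. If Σ_{k=1}^n V_k V_k* = I (the V_k form a row unitary), then W* V_1 = V_n W*. -/
import Mathlib


open ContinuousLinearMap

/-- For an isometric representation `{W, V_1, …, V_n}` of the odometer semigroup `O_n`
(indexed here by `Fin n`, with `V ⟨k⟩` playing the role of `V_{k+1}`):
if `{V_1, …, V_n}` is a row unitary, then `W* V_1 = V_n W*`. -/
theorem stmt_8 {H : Type*} [NormedAddCommGroup H] [InnerProductSpace ℂ H] [CompleteSpace H]
    (n : ℕ) (hn : 0 < n) (W : H →L[ℂ] H) (V : Fin n → H →L[ℂ] H)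
    (hWiso : adjoint W ∘L W = 1)
    (hViso : ∀ i, adjoint (V i) ∘L V i = 1)
    (horth : ∀ i j, i ≠ j → adjoint (V i) ∘L V j = 0)
    (hWV : ∀ i : Fin n, ∀ h : (i : ℕ) + 1 < n, W ∘L V i = V ⟨(i : ℕ) + 1, h⟩)
    (hWVn : W ∘L V ⟨n - 1, by omega⟩ = V ⟨0, hn⟩ ∘L W)
    (hrowunit : ∑ k : Fin n, V k ∘L adjoint (V k) = 1) :
    adjoint W ∘L V ⟨0, hn⟩ = V ⟨n - 1, by omega⟩ ∘L adjoint W := by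
  have key : ∀ k : Fin n, V k ∘L (adjoint (V k) ∘L (adjoint W ∘L V ⟨0, hn⟩)) =
      if k = ⟨n - 1, by omega⟩ then V ⟨n - 1, by omega⟩ ∘L adjoint W else 0 := by
    intro k
    have h1 : adjoint (V k) ∘L (adjoint W ∘L V ⟨0, hn⟩) =
        adjoint (W ∘L V k) ∘L V ⟨0, hn⟩ := by
      rw [adjoint_comp, comp_assoc]
    by_cases hk : k = ⟨n - 1, by omega⟩
    · subst hk
      simp only [if_true]
      rw [h1, hWVn, adjoint_comp, comp_assoc, hViso, one_def, ContinuousLinearMap.comp_id]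
    · rw [if_neg hk, h1]
      have hlt : (k : ℕ) + 1 < n := by
        have := k.isLt
        rcases Nat.lt_or_ge ((k : ℕ) + 1) n with h | h
        · exact h
        · exfalso; apply hk; ext; simp; omega
      rw [hWV k hlt, horth _ _ (by simp [Fin.ext_iff])]
      simp
  calc adjoint W ∘L V ⟨0, hn⟩
      = 1 ∘L (adjoint W ∘L V ⟨0, hn⟩) := by rw [one_def, id_comp]
    _ = (∑ k : Fin n, V k ∘L adjoint (V k)) ∘L (adjoint W ∘L V ⟨0, hn⟩) := by rw [hrowunit]
    _ = ∑ k : Fin n, V k ∘L (adjoint (V k) ∘L (adjoint W ∘L V ⟨0, hn⟩)) := by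
        simp only [finset_sum_comp, comp_assoc]
    _ = ∑ k : Fin n, if k = ⟨n - 1, by omega⟩ then V ⟨n - 1, by omega⟩ ∘L adjoint W else 0 := by
        exact Finset.sum_congr rfl fun k _ => key k
    _ = V ⟨n - 1, by omega⟩ ∘L adjoint W := by
        rw [Finset.sum_ite_eq' Finset.univ]; simp
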